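/- arXiv:2602.12703 — 4 statements merged into one kernel-verified Lean document; each statement's English description precedes it below -/
import Mathlib

section
/- Let σ > 0. Let a and b be independent positive real-valued random variables where a has probability density function p_a(y) = σ² y^{-1-2σ²} exp(-1/(2 y^{2σ²})) on (0, ∞) and b has probability density function p_b(y) = √(2/π) σ² y^{-1-σ²} exp(-1/(2 y^{2σ²})) on (0, ∞). Then the product a·b follows the Fréchet distribution with shape parameter σ² and scale 1, i.e. P(a·b ≤ y) = exp(-y^{-σ²}) for every y > 0. -/
open MeasureTheory ProbabilityTheory Real Set

open ENNReal

lemma lintegral_image_eq_lintegral_abs_deriv_mul' {s : Set ℝ} {f f' : ℝ → ℝ}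
    (hs : MeasurableSet s) (hf' : ∀ x ∈ s, HasDerivWithinAt f (f' x) s x)
    (hf : Set.InjOn f s) (g : ℝ → ℝ≥0∞) :
    ∫⁻ x in f '' s, g x = ∫⁻ x in s, ENNReal.ofReal |f' x| * g (f x) := by
  simpa only [ContinuousLinearMap.det_toSpanSingleton] using
    MeasureTheory.lintegral_image_eq_lintegral_abs_det_fderiv_mul volume hs
      (fun x hx => (hf' x hx).hasFDerivWithinAt) hf g

-- Glasser: image of v ↦ v - c/v
lemma glasser_img {c : ℝ} (hc : 0 < c) : (fun v : ℝ => v - c / v) '' Ioi 0 = univ := by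
  apply eq_univ_of_forall
  intro w
  refine ⟨(w + Real.sqrt (w ^ 2 + 4 * c)) / 2, ?_, ?_⟩
  · have h1 : |w| < Real.sqrt (w ^ 2 + 4 * c) := by
      have : |w| = Real.sqrt (w ^ 2) := by rw [Real.sqrt_sq_eq_abs]
      rw [this]
      apply Real.sqrt_lt_sqrt (sq_nonneg w)
      linarith
    have := neg_abs_le w
    have := abs_nonneg w
    simp only [mem_Ioi]
    nlinarith
  · have hs : Real.sqrt (w ^ 2 + 4 * c) ^ 2 = w ^ 2 + 4 * c := by
      rw [sq_sqrt]; nlinarith [sq_nonneg w]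
    have hv : (0:ℝ) < (w + Real.sqrt (w ^ 2 + 4 * c)) / 2 := by
      have h1 : |w| < Real.sqrt (w ^ 2 + 4 * c) := by
        have : |w| = Real.sqrt (w ^ 2) := by rw [Real.sqrt_sq_eq_abs]
        rw [this]
        apply Real.sqrt_lt_sqrt (sq_nonneg w)
        linarith
      have := neg_abs_le w
      nlinarith
    have h2 : c / ((w + Real.sqrt (w ^ 2 + 4 * c)) / 2)
        = (w + Real.sqrt (w ^ 2 + 4 * c)) / 2 - w := by
      rw [div_eq_iff (ne_of_gt hv)]
      nlinarith [hs]
    simp only [h2]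
    ring

lemma glasser_inj {c : ℝ} (hc : 0 < c) : Set.InjOn (fun v : ℝ => v - c / v) (Ioi 0) := by
  have : StrictMonoOn (fun v : ℝ => v - c / v) (Ioi 0) := by
    intro x hx y hy hxy
    have : c / y < c / x := div_lt_div_of_pos_left hc hx hxy
    simp only
    linarith
  exact this.injOn

lemma glasser_deriv {c : ℝ} {v : ℝ} (hv : 0 < v) :
    HasDerivAt (fun v : ℝ => v - c / v) (1 + c / v ^ 2) v := by
  have h1 : HasDerivAt (fun v : ℝ => c / v) (-(c / v ^ 2)) v := by
    simpa [div_eq_mul_inv, mul_comm] using (hasDerivAt_inv hv.ne').const_mul c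
  exact ((hasDerivAt_id' v).sub h1).congr_deriv (by ring)

lemma inv_img {c : ℝ} (hc : 0 < c) : (fun v : ℝ => c / v) '' Ioi 0 = Ioi 0 := by
  ext x
  constructor
  · rintro ⟨v, hv, rfl⟩
    exact div_pos hc hv
  · intro hx
    exact ⟨c / x, div_pos hc hx, by field_simp⟩

lemma my_inv_inj {c : ℝ} (hc : 0 < c) : Set.InjOn (fun v : ℝ => c / v) (Ioi 0) := by
  intro x hx y hy h
  simp only at h
  rw [div_eq_div_iff (ne_of_gt hx) (ne_of_gt hy)] at h
  exact mul_left_cancel₀ (ne_of_gt hc) h.symm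

lemma inv_deriv {c v : ℝ} (hv : 0 < v) :
    HasDerivAt (fun v : ℝ => c / v) (-(c / v ^ 2)) v := by
  simpa [div_eq_mul_inv, mul_comm] using (hasDerivAt_inv hv.ne').const_mul c

lemma gauss_lintegral :
    ∫⁻ x : ℝ, ENNReal.ofReal (Real.exp (-(x ^ 2 / 2))) = ENNReal.ofReal (Real.sqrt (2 * π)) := by
  have hfun : (fun x : ℝ => Real.exp (-(x ^ 2 / 2))) = fun x => Real.exp (-(1/2 : ℝ) * x ^ 2) := by
    funext x; congr 1; ring
  rw [← ofReal_integral_eq_lintegral_ofReal]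
  · congr 1
    rw [hfun, integral_gaussian]
    rw [show π / (1/2) = 2 * π by ring]
  · rw [hfun]
    exact integrable_exp_neg_mul_sq (by norm_num)
  · exact Filter.Eventually.of_forall fun x => (Real.exp_pos _).le

lemma E_meas {c : ℝ} : Measurable fun v : ℝ => ENNReal.ofReal (Real.exp (-((v - c / v) ^ 2 / 2))) := by
  apply Measurable.ennreal_ofReal
  apply Real.measurable_exp.comp
  apply Measurable.neg
  apply Measurable.div_const
  exact ((measurable_id.sub (measurable_const.div measurable_id)).pow_const 2)

lemma glasser {c : ℝ} (hc : 0 < c) :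
    2 * ∫⁻ v in Ioi (0:ℝ), ENNReal.ofReal (Real.exp (-((v - c / v) ^ 2 / 2)))
      = ENNReal.ofReal (Real.sqrt (2 * π)) := by
  set E : ℝ → ℝ≥0∞ := fun v => ENNReal.ofReal (Real.exp (-((v - c / v) ^ 2 / 2))) with hE
  set J := ∫⁻ v in Ioi (0:ℝ), E v with hJ
  -- change of variables with v ↦ v - c/v
  have h1 := lintegral_image_eq_lintegral_abs_deriv_mul' (f := fun v => v - c / v)
      (f' := fun v => 1 + c / v ^ 2) measurableSet_Ioi
      (fun x hx => (glasser_deriv (c := c) hx).hasDerivWithinAt) (glasser_inj hc)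
      (fun x => ENNReal.ofReal (Real.exp (-(x ^ 2 / 2))))
  rw [glasser_img hc, setLIntegral_univ, gauss_lintegral] at h1
  -- split RHS of h1
  have h2 : ∫⁻ v in Ioi (0:ℝ),
      ENNReal.ofReal |1 + c / v ^ 2| * ENNReal.ofReal (Real.exp (-((v - c / v) ^ 2 / 2)))
      = J + ∫⁻ v in Ioi (0:ℝ), ENNReal.ofReal (c / v ^ 2) * E v := by
    rw [hJ, ← lintegral_add_left (E_meas (c := c))]
    apply setLIntegral_congr_fun measurableSet_Ioi
    simp only [EqOn]
    intro v hv
    have hv2 : (0:ℝ) ≤ c / v ^ 2 := le_of_lt (div_pos hc (pow_pos hv 2))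
    rw [abs_of_nonneg (by linarith), ENNReal.ofReal_add (by norm_num) hv2,
      ENNReal.ofReal_one, add_mul, one_mul]
  -- change of variables with v ↦ c/v shows the second integral equals J
  have h3 := lintegral_image_eq_lintegral_abs_deriv_mul' (f := fun v => c / v)
      (f' := fun v => -(c / v ^ 2)) measurableSet_Ioi
      (fun x hx => (inv_deriv (c := c) hx).hasDerivWithinAt) (my_inv_inj hc) E
  rw [inv_img hc] at h3
  have h4 : ∫⁻ v in Ioi (0:ℝ), ENNReal.ofReal |(-(c / v ^ 2))| * E (c / v)
      = ∫⁻ v in Ioi (0:ℝ), ENNReal.ofReal (c / v ^ 2) * E v := by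
    apply setLIntegral_congr_fun measurableSet_Ioi
    simp only [EqOn]
    intro v hv
    have hv2 : (0:ℝ) ≤ c / v ^ 2 := le_of_lt (div_pos hc (pow_pos hv 2))
    have hcc : c / (c / v) = v := by field_simp
    rw [abs_neg, abs_of_nonneg hv2, hE]
    simp only [hcc]
    rw [show (c / v - v) ^ 2 = (v - c / v) ^ 2 by ring]
  rw [h4] at h3
  rw [← h3, ← hJ] at h2
  rw [two_mul, ← h2, h1]

lemma exp_tail {d : ℝ} :
    ∫⁻ x in Ici d, ENNReal.ofReal (1 / 2 * Real.exp (-(x / 2)))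
      = ENNReal.ofReal (Real.exp (-(d / 2))) := by
  have hderiv : ∀ x ∈ Ioi d, HasDerivAt (fun x : ℝ => -Real.exp (-(x / 2)))
      (1 / 2 * Real.exp (-(x / 2))) x := by
    intro x _
    have h1 : HasDerivAt (fun x : ℝ => -(x / 2)) (-(1 / 2)) x := by
      exact ((hasDerivAt_id' x).div_const 2).neg
    have := (Real.hasDerivAt_exp (-(x / 2))).comp x h1
    exact this.neg.congr_deriv (by ring)
  have hcont : ContinuousWithinAt (fun x : ℝ => -Real.exp (-(x / 2))) (Ici d) d :=
    (Continuous.neg (Real.continuous_exp.comp (continuous_id.div_const 2).neg)).continuousWithinAt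
  have htend : Filter.Tendsto (fun x : ℝ => -Real.exp (-(x / 2))) Filter.atTop (nhds 0) := by
    rw [show (0:ℝ) = -0 by norm_num]
    apply Filter.Tendsto.neg
    apply Real.tendsto_exp_atBot.comp
    have : Filter.Tendsto (fun x : ℝ => x / 2) Filter.atTop Filter.atTop :=
      Filter.tendsto_id.atTop_div_const (by norm_num)
    exact Filter.tendsto_neg_atBot_iff.mpr this
  have hint : IntegrableOn (fun x : ℝ => 1 / 2 * Real.exp (-(x / 2))) (Ioi d) :=
    integrableOn_Ioi_deriv_of_nonneg hcont hderiv
      (fun x _ => by positivity) htend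
  rw [← MeasureTheory.restrict_Ioi_eq_restrict_Ici,
    ← ofReal_integral_eq_lintegral_ofReal hint
      (Filter.Eventually.of_forall fun x => by positivity)]
  congr 1
  rw [integral_Ioi_of_hasDerivAt_of_tendsto hcont hderiv hint htend]
  simp

lemma rpow_img {q d : ℝ} (hq : 0 < q) (hd : 0 < d) :
    (fun x : ℝ => x ^ (-(1/q))) '' Ici d = Ioc 0 (d ^ (-(1/q))) := by
  have hqne : q ≠ 0 := ne_of_gt hq
  ext s
  constructor
  · rintro ⟨x, hx, rfl⟩
    have hx0 : 0 < x := lt_of_lt_of_le hd hx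
    exact ⟨Real.rpow_pos_of_pos hx0 _,
      Real.rpow_le_rpow_of_nonpos hd hx (neg_nonpos.mpr (by positivity))⟩
  · rintro ⟨hs0, hsT⟩
    have hTd : (d ^ (-(1/q))) ^ (-q) = d := by
      rw [← Real.rpow_mul hd.le]
      rw [show -(1/q) * -q = 1 by field_simp]
      exact Real.rpow_one d
    refine ⟨s ^ (-q), ?_, ?_⟩
    · rw [mem_Ici, ← hTd]
      exact Real.rpow_le_rpow_of_nonpos hs0 hsT (neg_nonpos.mpr hq.le)
    · simp only
      rw [← Real.rpow_mul hs0.le]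
      rw [show -q * -(1/q) = 1 by field_simp]
      exact Real.rpow_one s

lemma key1 {σ T : ℝ} (hσ : 0 < σ) (hT : 0 < T) :
    ∫⁻ x in Ioc (0:ℝ) T,
      ENNReal.ofReal (σ ^ 2 * x ^ (-1 - 2 * σ ^ 2) * Real.exp (-(1 / (2 * x ^ (2 * σ ^ 2)))))
      = ENNReal.ofReal (Real.exp (-(1 / (2 * T ^ (2 * σ ^ 2))))) := by
  set q := 2 * σ ^ 2 with hq
  have hq0 : 0 < q := by positivity
  have hqne : q ≠ 0 := ne_of_gt hq0
  set d := T ^ (-q) with hd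
  have hd0 : 0 < d := Real.rpow_pos_of_pos hT _
  have hTd : d ^ (-(1/q)) = T := by
    rw [hd, ← Real.rpow_mul hT.le]
    rw [show -q * -(1/q) = 1 by field_simp]
    exact Real.rpow_one T
  have h1 := lintegral_image_eq_lintegral_abs_deriv_mul' (f := fun x : ℝ => x ^ (-(1/q)))
      (f' := fun x : ℝ => -(1/q) * x ^ (-(1/q) - 1)) measurableSet_Ici
      (fun x hx => (Real.hasDerivAt_rpow_const
        (Or.inl (ne_of_gt (lt_of_lt_of_le hd0 hx)))).hasDerivWithinAt)
      ((Real.rpow_left_injOn (by simp [hqne] : -(1/q) ≠ 0)).mono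
        (fun x hx => le_trans hd0.le hx))
      (fun s => ENNReal.ofReal (σ ^ 2 * s ^ (-1 - q) * Real.exp (-(1 / (2 * s ^ q)))))
  rw [rpow_img hq0 hd0, hTd] at h1
  rw [h1]
  have h2 : ∫⁻ x in Ici d, ENNReal.ofReal |(-(1/q)) * x ^ (-(1/q) - 1)|
        * ENNReal.ofReal (σ ^ 2 * (x ^ (-(1/q))) ^ (-1 - q)
          * Real.exp (-(1 / (2 * (x ^ (-(1/q))) ^ q))))
      = ∫⁻ x in Ici d, ENNReal.ofReal (1 / 2 * Real.exp (-(x / 2))) := by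
    apply setLIntegral_congr_fun measurableSet_Ici
    simp only [EqOn]
    intro x hx
    have hx0 : 0 < x := lt_of_lt_of_le hd0 hx
    have e1 : (x ^ (-(1/q))) ^ q = x⁻¹ := by
      rw [← Real.rpow_mul hx0.le, show -(1/q) * q = -1 by field_simp]
      exact Real.rpow_neg_one x
    have e2 : (x ^ (-(1/q))) ^ (-1 - q) = x ^ ((1 + q)/q) := by
      rw [← Real.rpow_mul hx0.le]
      congr 1
      field_simp
      ring
    have e3 : x ^ (-(1/q) - 1) * x ^ ((1 + q)/q) = 1 := by
      rw [← Real.rpow_add hx0, show -(1/q) - 1 + (1 + q)/q = 0 by field_simp; ring]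
      exact Real.rpow_zero x
    have e4 : -(1 / (2 * x⁻¹)) = -(x / 2) := by
      rw [one_div, mul_inv, inv_inv]
      ring
    have habs : |(-(1/q)) * x ^ (-(1/q) - 1)| = 1/q * x ^ (-(1/q) - 1) := by
      rw [abs_mul, abs_neg, abs_of_nonneg (by positivity : (0:ℝ) ≤ 1/q),
        abs_of_nonneg (Real.rpow_nonneg hx0.le _)]
    rw [habs, e1, e2, e4, ← ENNReal.ofReal_mul (by positivity)]
    congr 1
    calc 1/q * x ^ (-(1/q) - 1) * (σ ^ 2 * x ^ ((1 + q)/q) * Real.exp (-(x / 2)))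
        = σ ^ 2 / q * (x ^ (-(1/q) - 1) * x ^ ((1 + q)/q)) * Real.exp (-(x / 2)) := by ring
      _ = 1 / 2 * Real.exp (-(x / 2)) := by
          rw [e3, mul_one, hq]
          congr 1
          field_simp
  rw [h2, exp_tail]
  congr 2
  rw [hd, Real.rpow_neg hT.le]
  field_simp

lemma rpow_img_Ioi {p : ℝ} (hp : p ≠ 0) : (fun x : ℝ => x ^ p) '' Ioi 0 = Ioi 0 := by
  ext x
  rw [mem_image]
  constructor
  · rintro ⟨v, hv, rfl⟩
    exact Real.rpow_pos_of_pos hv p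
  · intro hx
    refine ⟨x ^ (1/p), Real.rpow_pos_of_pos hx _, ?_⟩
    rw [← Real.rpow_mul (le_of_lt hx), one_div_mul_cancel hp, Real.rpow_one]

lemma key2 {σ y : ℝ} (hσ : 0 < σ) (hy : 0 < y) :
    ∫⁻ u in Ioi (0:ℝ), ENNReal.ofReal (Real.sqrt (2/π) * σ ^ 2 * u ^ (-1 - σ ^ 2)
        * Real.exp (-(1/(2 * u ^ (2 * σ ^ 2)))) * Real.exp (-(1/(2 * (y/u) ^ (2 * σ ^ 2)))))
      = ENNReal.ofReal (Real.exp (-(y ^ (-σ ^ 2)))) := by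
  set r := σ ^ 2 with hr
  have hr0 : 0 < r := by positivity
  have hrne : r ≠ 0 := ne_of_gt hr0
  set c := y ^ (-r) with hc
  have hc0 : 0 < c := Real.rpow_pos_of_pos hy _
  have h1 := lintegral_image_eq_lintegral_abs_deriv_mul' (f := fun v : ℝ => v ^ (-(1/r)))
      (f' := fun v : ℝ => -(1/r) * v ^ (-(1/r) - 1)) measurableSet_Ioi
      (fun v hv => (Real.hasDerivAt_rpow_const (Or.inl (ne_of_gt hv))).hasDerivWithinAt)
      ((Real.rpow_left_injOn (by simp [hrne] : -(1/r) ≠ 0)).mono (fun v (hv : v ∈ Ioi (0:ℝ)) => show v ∈ {y : ℝ | 0 ≤ y} from (le_of_lt (show (0:ℝ) < v from hv) : (0:ℝ) ≤ v)))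
      (fun u => ENNReal.ofReal (Real.sqrt (2/π) * σ ^ 2 * u ^ (-1 - r)
        * Real.exp (-(1/(2 * u ^ (2 * r)))) * Real.exp (-(1/(2 * (y/u) ^ (2 * r))))))
  rw [rpow_img_Ioi (by simp [hrne] : -(1/r) ≠ 0)] at h1
  rw [h1]
  have h2 : ∫⁻ v in Ioi (0:ℝ), ENNReal.ofReal |(-(1/r)) * v ^ (-(1/r) - 1)|
        * ENNReal.ofReal (Real.sqrt (2/π) * σ ^ 2 * (v ^ (-(1/r))) ^ (-1 - r)
          * Real.exp (-(1/(2 * (v ^ (-(1/r))) ^ (2 * r))))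
          * Real.exp (-(1/(2 * (y/(v ^ (-(1/r)))) ^ (2 * r)))))
      = ∫⁻ v in Ioi (0:ℝ), ENNReal.ofReal (Real.sqrt (2/π) * Real.exp (-c))
          * ENNReal.ofReal (Real.exp (-((v - c/v) ^ 2 / 2))) := by
    apply setLIntegral_congr_fun measurableSet_Ioi
    simp only [EqOn]
    intro v hv
    have hv0 : (0:ℝ) < v := hv
    have hu0 : (0:ℝ) < v ^ (-(1/r)) := Real.rpow_pos_of_pos hv0 _
    have e1 : (v ^ (-(1/r))) ^ (2 * r) = (v ^ 2)⁻¹ := by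
      rw [← Real.rpow_mul hv0.le, show -(1/r) * (2 * r) = -2 by field_simp]
      rw [show (-2 : ℝ) = -(2:ℕ) by norm_num, Real.rpow_neg hv0.le, Real.rpow_natCast]
    have e2 : (v ^ (-(1/r))) ^ (-1 - r) = v ^ ((1 + r)/r) := by
      rw [← Real.rpow_mul hv0.le]
      congr 1
      field_simp
      ring
    have e3 : v ^ (-(1/r) - 1) * v ^ ((1 + r)/r) = 1 := by
      rw [← Real.rpow_add hv0, show -(1/r) - 1 + (1 + r)/r = 0 by field_simp; ring]
      exact Real.rpow_zero v
    have e4 : (y / v ^ (-(1/r))) ^ (2 * r) = y ^ (2 * r) * (v ^ 2)⁻¹⁻¹ := by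
      rw [Real.div_rpow hy.le hu0.le, e1, div_eq_mul_inv]
    have e5 : y ^ (2 * r) = (c ^ 2)⁻¹ := by
      rw [hc, ← Real.rpow_natCast (y ^ (-r)) 2, ← Real.rpow_mul hy.le,
        show -r * (2:ℕ) = -(2 * r) by push_cast; ring, Real.rpow_neg hy.le, inv_inv]
    have habs : |(-(1/r)) * v ^ (-(1/r) - 1)| = 1/r * v ^ (-(1/r) - 1) := by
      rw [abs_mul, abs_neg, abs_of_nonneg (by positivity : (0:ℝ) ≤ 1/r),
        abs_of_nonneg (Real.rpow_nonneg hv0.le _)]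
    rw [habs, e1, e2, e4, e5, ← ENNReal.ofReal_mul (by positivity),
      ← ENNReal.ofReal_mul (by positivity)]
    congr 1
    have hexp1 : -(1 / (2 * (v ^ 2)⁻¹)) = -(v ^ 2 / 2) := by
      rw [one_div, mul_inv, inv_inv]; ring
    have hexp2 : -(1 / (2 * ((c ^ 2)⁻¹ * (v ^ 2)⁻¹⁻¹))) = -(c ^ 2 / v ^ 2 / 2) := by
      rw [inv_inv, one_div, mul_inv, mul_inv, inv_inv]; ring
    rw [hexp1, hexp2]
    have hsum : Real.exp (-(v ^ 2 / 2)) * Real.exp (-(c ^ 2 / v ^ 2 / 2))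
        = Real.exp (-c) * Real.exp (-((v - c/v) ^ 2 / 2)) := by
      rw [← Real.exp_add, ← Real.exp_add]
      congr 1
      field_simp
      ring
    calc 1/r * v ^ (-(1/r) - 1) * (Real.sqrt (2/π) * σ ^ 2 * v ^ ((1 + r)/r)
          * Real.exp (-(v ^ 2 / 2)) * Real.exp (-(c ^ 2 / v ^ 2 / 2)))
        = Real.sqrt (2/π) * (σ ^ 2 / r) * (v ^ (-(1/r) - 1) * v ^ ((1 + r)/r))
          * (Real.exp (-(v ^ 2 / 2)) * Real.exp (-(c ^ 2 / v ^ 2 / 2))) := by ring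
      _ = Real.sqrt (2/π) * Real.exp (-c) * Real.exp (-((v - c/v) ^ 2 / 2)) := by
          rw [e3, hsum, hr, div_self (by positivity : σ ^ 2 ≠ 0)]
          ring
  rw [h2, lintegral_const_mul' _ _ ENNReal.ofReal_ne_top]
  -- use Glasser
  rw [← ENNReal.mul_right_inj (two_ne_zero) (ENNReal.ofNat_ne_top)]
  rw [← mul_assoc, mul_comm (2 : ℝ≥0∞) (ENNReal.ofReal (Real.sqrt (2/π) * Real.exp (-c))),
    mul_assoc, glasser hc0, ← ENNReal.ofReal_mul (by positivity),
    show (2 : ℝ≥0∞) = ENNReal.ofReal (2:ℝ) by simp, ← ENNReal.ofReal_mul (by norm_num)]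
  congr 1
  have hs : Real.sqrt (2/π) * Real.sqrt (2 * π) = 2 := by
    rw [← Real.sqrt_mul (by positivity : (0:ℝ) ≤ 2/π)]
    rw [show 2/π * (2 * π) = 4 by field_simp; ring]
    rw [show (4:ℝ) = 2 ^ 2 by norm_num, Real.sqrt_sq (by norm_num)]
  calc Real.sqrt (2/π) * Real.exp (-c) * Real.sqrt (2 * π)
      = Real.sqrt (2/π) * Real.sqrt (2 * π) * Real.exp (-c) := by ring
    _ = 2 * Real.exp (-c) := by rw [hs]


/-- If `a` has density `p_a` and `b` has density `p_b` on `(0, ∞)` and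
`a, b` are independent, then the product `a * b` is Fréchet with shape `σ²` and scale 1:
`P(a·b ≤ y) = exp (-y^{-σ²})` for all `y > 0`. -/
theorem swing_frechet_factorization
    {Ω : Type*} [MeasurableSpace Ω] (μ : Measure Ω) [IsProbabilityMeasure μ]
    (σ : ℝ) (hσ : 0 < σ)
    (a b : Ω → ℝ) (ha : Measurable a) (hb : Measurable b)
    (hab : IndepFun a b μ)
    (hA : Measure.map a μ = volume.withDensity (fun y =>
      ENNReal.ofReal (Set.indicator (Set.Ioi (0:ℝ))
        (fun y => σ ^ 2 * y ^ (-1 - 2 * σ ^ 2) * Real.exp (-(1 / (2 * y ^ (2 * σ ^ 2))))) y)))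
    (hB : Measure.map b μ = volume.withDensity (fun y =>
      ENNReal.ofReal (Set.indicator (Set.Ioi (0:ℝ))
        (fun y => Real.sqrt (2 / π) * σ ^ 2 * y ^ (-1 - σ ^ 2)
          * Real.exp (-(1 / (2 * y ^ (2 * σ ^ 2))))) y))) :
    ∀ y : ℝ, 0 < y →
      μ {ω | a ω * b ω ≤ y} = ENNReal.ofReal (Real.exp (-(y ^ (-σ ^ 2)))) := by
  intro y hy
  haveI i1 : IsProbabilityMeasure (μ.map a) := Measure.isProbabilityMeasure_map ha.aemeasurable
  haveI i2 : IsProbabilityMeasure (μ.map b) := Measure.isProbabilityMeasure_map hb.aemeasurable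
  set pa : ℝ → ℝ := fun s => σ ^ 2 * s ^ (-1 - 2 * σ ^ 2)
    * Real.exp (-(1 / (2 * s ^ (2 * σ ^ 2)))) with hpa
  set pb : ℝ → ℝ := fun s => Real.sqrt (2 / π) * σ ^ 2 * s ^ (-1 - σ ^ 2)
    * Real.exp (-(1 / (2 * s ^ (2 * σ ^ 2)))) with hpb
  have hpa_meas : Measurable pa := by
    rw [hpa]; fun_prop
  have hpb_meas : Measurable pb := by
    rw [hpb]; fun_prop
  have hindA : (fun s => ENNReal.ofReal ((Set.Ioi (0:ℝ)).indicator pa s))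
      = (Set.Ioi (0:ℝ)).indicator (fun s => ENNReal.ofReal (pa s)) := by
    funext s
    by_cases h : s ∈ Set.Ioi (0:ℝ) <;> simp [h]
  have hindB : (fun s => ENNReal.ofReal ((Set.Ioi (0:ℝ)).indicator pb s))
      = (Set.Ioi (0:ℝ)).indicator (fun s => ENNReal.ofReal (pb s)) := by
    funext s
    by_cases h : s ∈ Set.Ioi (0:ℝ) <;> simp [h]
  have hS : MeasurableSet {p : ℝ × ℝ | p.1 * p.2 ≤ y} :=
    measurableSet_le (measurable_fst.mul measurable_snd) measurable_const
  -- inner computation: CDF of a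
  have inner : ∀ u : ℝ, 0 < u → (μ.map a) {s | s * u ≤ y}
      = ENNReal.ofReal (Real.exp (-(1 / (2 * (y/u) ^ (2 * σ ^ 2))))) := by
    intro u hu
    have hset : MeasurableSet {s : ℝ | s * u ≤ y} :=
      measurableSet_le (measurable_id.mul_const u) measurable_const
    rw [hA, withDensity_apply _ hset, hindA, lintegral_indicator measurableSet_Ioi,
      Measure.restrict_restrict measurableSet_Ioi]
    have hIoc : Set.Ioi (0:ℝ) ∩ {s : ℝ | s * u ≤ y} = Set.Ioc 0 (y/u) := by
      ext s
      simp only [Set.mem_inter_iff, Set.mem_Ioi, Set.mem_setOf_eq, Set.mem_Ioc]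
      constructor
      · rintro ⟨h1, h2⟩
        exact ⟨h1, (le_div_iff₀ hu).mpr h2⟩
      · rintro ⟨h1, h2⟩
        exact ⟨h1, (le_div_iff₀ hu).mp h2⟩
    rw [hIoc]
    exact key1 hσ (div_pos hy hu)
  -- main computation
  have hmap : μ {ω | a ω * b ω ≤ y}
      = ((μ.map a).prod (μ.map b)) {p : ℝ × ℝ | p.1 * p.2 ≤ y} := by
    rw [← (indepFun_iff_map_prod_eq_prod_map_map ha.aemeasurable hb.aemeasurable).mp hab,
      Measure.map_apply (ha.prodMk hb) hS]
    rfl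
  rw [hmap, Measure.prod_apply_symm hS]
  have hpre : ∀ u : ℝ, (fun s => (s, u)) ⁻¹' {p : ℝ × ℝ | p.1 * p.2 ≤ y} = {s | s * u ≤ y} :=
    fun u => rfl
  simp_rw [hpre]
  rw [hB, lintegral_withDensity_eq_lintegral_mul_non_measurable _
    (hpb_meas.indicator measurableSet_Ioi).ennreal_ofReal
    (Filter.Eventually.of_forall fun x => ENNReal.ofReal_lt_top)]
  have hsplit : ∀ u : ℝ,
      (ENNReal.ofReal ((Set.Ioi (0:ℝ)).indicator pb u)) * (μ.map a) {s | s * u ≤ y}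
      = (Set.Ioi (0:ℝ)).indicator
          (fun u => ENNReal.ofReal (pb u) * (μ.map a) {s | s * u ≤ y}) u := by
    intro u
    by_cases h : u ∈ Set.Ioi (0:ℝ) <;> simp [h]
  calc ∫⁻ u, (fun u => ENNReal.ofReal ((Set.Ioi (0:ℝ)).indicator pb u))
        u * (μ.map a) {s | s * u ≤ y} ∂volume
      = ∫⁻ u in Set.Ioi (0:ℝ), ENNReal.ofReal (pb u) * (μ.map a) {s | s * u ≤ y} := by
        simp_rw [hsplit]
        exact lintegral_indicator measurableSet_Ioi _
    _ = ∫⁻ u in Set.Ioi (0:ℝ), ENNReal.ofReal (pb u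
          * Real.exp (-(1 / (2 * (y/u) ^ (2 * σ ^ 2))))) := by
        apply setLIntegral_congr_fun measurableSet_Ioi
        simp only [EqOn]
        intro u hu
        have hpbu : (0:ℝ) ≤ pb u :=
          mul_nonneg (mul_nonneg (mul_nonneg (Real.sqrt_nonneg _) (sq_nonneg _))
            (Real.rpow_nonneg (le_of_lt hu) _)) (Real.exp_pos _).le
        rw [inner u hu, ← ENNReal.ofReal_mul hpbu]
    _ = ENNReal.ofReal (Real.exp (-(y ^ (-σ ^ 2)))) := key2 hσ hy
end

section
/- Let σ > 0 and let p_b(y) = √(2/π) σ² y^{-1-σ²} exp(-1/(2 y^{2σ²})) for y > 0. Then for every real s with s < 1 + σ², the Mellin transform of p_b satisfies ∫₀^∞ y^{s-1} p_b(y) dy = (1/√π) · 2^{-(s-1)/(2σ²)} Γ((1-s)/(2σ²) + 1/2), where Γ is the Gamma function. -/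
open MeasureTheory Real Set

/-- Mellin transform of `p_b(y) = √(2/π) σ² y^{-1-σ²} exp (-1/(2 y^{2σ²}))`:
for `s < 1 + σ²`, `∫₀^∞ y^{s-1} p_b(y) dy = (1/√π) 2^{-(s-1)/(2σ²)} Γ((1-s)/(2σ²) + 1/2)`. -/
theorem mellin_pb (σ : ℝ) (hσ : 0 < σ) (s : ℝ) (hs : s < 1 + σ ^ 2) :
    ∫ y in Set.Ioi (0:ℝ),
      y ^ (s - 1) * (Real.sqrt (2 / π) * σ ^ 2 * y ^ (-1 - σ ^ 2)
        * Real.exp (-(1 / (2 * y ^ (2 * σ ^ 2)))))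
      = (1 / Real.sqrt π) * (2:ℝ) ^ (-(s - 1) / (2 * σ ^ 2))
        * Real.Gamma ((1 - s) / (2 * σ ^ 2) + 1 / 2) := by
  have hσ2 : (0:ℝ) < σ ^ 2 := by positivity
  set C : ℝ := Real.sqrt (2 / π) * σ ^ 2 with hC
  set g : ℝ → ℝ := fun y => C * (y ^ (s - 2 - σ ^ 2) * Real.exp (-(1/2) * y ^ (-(2 * σ ^ 2))))
  have h1 : ∫ y in Set.Ioi (0:ℝ),
      y ^ (s - 1) * (Real.sqrt (2 / π) * σ ^ 2 * y ^ (-1 - σ ^ 2)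
        * Real.exp (-(1 / (2 * y ^ (2 * σ ^ 2))))) = ∫ y in Set.Ioi (0:ℝ), g y := by
    refine setIntegral_congr_fun measurableSet_Ioi (fun y hy => ?_)
    have hy0 : (0:ℝ) < y := hy
    simp only [g]
    have he : -(1 / (2 * y ^ (2 * σ ^ 2))) = -(1/2) * y ^ (-(2 * σ ^ 2)) := by
      rw [Real.rpow_neg hy0.le]; field_simp
    rw [he, show s - 2 - σ ^ 2 = (s - 1) + (-1 - σ ^ 2) by ring, Real.rpow_add hy0]
    ring
  rw [h1]
  have h2 : (∫ x in Set.Ioi (0:ℝ), (|(-1:ℝ)| * x ^ ((-1:ℝ) - 1)) • g (x ^ (-1:ℝ)))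
      = ∫ y in Set.Ioi (0:ℝ), g y :=
    integral_comp_rpow_Ioi g (by norm_num)
  rw [← h2]
  have h3 : ∀ x ∈ Set.Ioi (0:ℝ), (|(-1:ℝ)| * x ^ ((-1:ℝ) - 1)) • g (x ^ (-1:ℝ))
      = C * (x ^ (σ ^ 2 - s) * Real.exp (-(1/2) * x ^ (2 * σ ^ 2))) := by
    intro x hx
    have hx0 : (0:ℝ) < x := hx
    simp only [g, smul_eq_mul, abs_neg, abs_one, one_mul]
    rw [← Real.rpow_mul hx0.le, ← Real.rpow_mul hx0.le,
      show (-1:ℝ) * -(2 * σ ^ 2) = 2 * σ ^ 2 by ring]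
    have hab : x ^ ((-1:ℝ) - 1) * x ^ ((-1:ℝ) * (s - 2 - σ ^ 2)) = x ^ (σ ^ 2 - s) := by
      rw [← Real.rpow_add hx0]; congr 1; ring
    linear_combination C * Real.exp (-(1/2) * x ^ (2 * σ ^ 2)) * hab
  rw [setIntegral_congr_fun measurableSet_Ioi h3, integral_const_mul]
  have h4 : ∫ x in Set.Ioi (0:ℝ), x ^ (σ ^ 2 - s) * Real.exp (-(1/2) * x ^ (2 * σ ^ 2))
      = (1/2:ℝ) ^ (-(σ ^ 2 - s + 1) / (2 * σ ^ 2)) * (1 / (2 * σ ^ 2))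
        * Real.Gamma ((σ ^ 2 - s + 1) / (2 * σ ^ 2)) := by
    exact integral_rpow_mul_exp_neg_mul_rpow (by positivity) (by linarith) (by norm_num)
  rw [h4]
  have hΓ : (σ ^ 2 - s + 1) / (2 * σ ^ 2) = (1 - s) / (2 * σ ^ 2) + 1 / 2 := by
    field_simp; ring
  rw [hΓ]
  have hb : ((1/2:ℝ)) ^ (-(σ ^ 2 - s + 1) / (2 * σ ^ 2))
      = Real.sqrt 2 * (2:ℝ) ^ (-(s - 1) / (2 * σ ^ 2)) := by
    rw [show ((1/2:ℝ)) = 2⁻¹ by norm_num, Real.inv_rpow (by norm_num),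
      ← Real.rpow_neg (by norm_num), neg_div, neg_neg,
      show (σ ^ 2 - s + 1) / (2 * σ ^ 2) = 1/2 + -(s-1) / (2 * σ ^ 2) by field_simp; ring,
      Real.rpow_add (by norm_num)]
    congr 1
    rw [← Real.sqrt_eq_rpow]
  rw [hb, hC]
  have h2s : Real.sqrt 2 * Real.sqrt 2 = 2 := Real.mul_self_sqrt (by norm_num)
  have hsd : Real.sqrt (2 / π) = Real.sqrt 2 / Real.sqrt π := Real.sqrt_div (by norm_num) π
  have hπ : (0:ℝ) < Real.sqrt π := Real.sqrt_pos.mpr Real.pi_pos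
  rw [hsd]
  set A := (2:ℝ) ^ (-(s - 1) / (2 * σ ^ 2)) with hA
  set G := Real.Gamma ((1 - s) / (2 * σ ^ 2) + 1 / 2) with hG
  field_simp
  linear_combination (2:ℝ) ^ (-(s - 1) / (2 * σ ^ 2))
    * Real.Gamma ((1 - s) / (2 * σ ^ 2) + 1 / 2) * h2s
end

section
/- Let N ≥ 1, let w₁, …, w_N be strictly positive real numbers, and let τ₁, …, τ_N be independent random variables each with the standard Gumbel distribution (cdf t ↦ exp(-e^{-t})). Then almost surely the index maximizing log(w_i) + τ_i over i ∈ {1, …, N} is unique, and for every j ∈ {1, …, N}, P(argmax_{i=1,…,N} (log(w_i) + τ_i) = j) = w_j / (w₁ + ⋯ + w_N). -/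
open MeasureTheory ProbabilityTheory Real Set Filter Topology



namespace GumbelAux

lemma hasDerivAt_aux (a : ℝ) (ha : 0 < a) (t : ℝ) :
    HasDerivAt (fun t => exp (-(a * exp (-t))) / a) (exp (-t - a * exp (-t))) t := by
  have h1 : HasDerivAt (fun t : ℝ => -(a * exp (-t))) (a * exp (-t)) t := by
    have h0 : HasDerivAt (fun t : ℝ => exp (-t)) (-exp (-t)) t := by
      simpa using (hasDerivAt_neg t).exp
    simpa [mul_comm] using ((h0.const_mul a).fun_neg)
  have h2 := (Real.hasDerivAt_exp (-(a * exp (-t)))).comp t h1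
  have h3 : HasDerivAt (fun t => exp (-(a * exp (-t))) / a)
      (rexp (-(a * rexp (-t))) * (a * rexp (-t)) / a) t := h2.div_const a
  convert h3 using 1
  rw [show (-t - a * exp (-t)) = -(a * exp (-t)) + -t by ring, exp_add]
  field_simp

end GumbelAux

namespace GumbelAux

lemma tendsto_top (a : ℝ) (ha : 0 < a) :
    Tendsto (fun t => exp (-(a * exp (-t))) / a) atTop (𝓝 (1 / a)) := by
  have h1 : Tendsto (fun t : ℝ => exp (-t)) atTop (𝓝 0) :=
    Real.tendsto_exp_atBot.comp tendsto_neg_atTop_atBot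
  have h2 : Tendsto (fun t : ℝ => -(a * exp (-t))) atTop (𝓝 0) := by
    simpa using ((h1.const_mul a).neg)
  have := (Real.continuous_exp.tendsto 0).comp h2
  simpa using this.div_const a

lemma tendsto_bot (a : ℝ) (ha : 0 < a) :
    Tendsto (fun t => exp (-(a * exp (-t))) / a) atBot (𝓝 0) := by
  have h1 : Tendsto (fun t : ℝ => exp (-t)) atBot atTop :=
    Real.tendsto_exp_atTop.comp tendsto_neg_atBot_atTop
  have h2 : Tendsto (fun t : ℝ => -(a * exp (-t))) atBot atBot :=
    tendsto_neg_atTop_atBot.comp (h1.const_mul_atTop ha)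
  have := Real.tendsto_exp_atBot.comp h2
  simpa using this.div_const a

lemma continuous_aux (a : ℝ) : Continuous (fun t => exp (-t - a * exp (-t))) := by
  fun_prop

lemma integrable_aux (a : ℝ) (ha : 0 < a) :
    Integrable (fun t => exp (-t - a * exp (-t))) := by
  have hIoi : IntegrableOn (fun t => exp (-t - a * exp (-t))) (Ioi 0) := by
    refine integrableOn_Ioi_deriv_of_nonneg' (fun x _ => hasDerivAt_aux a ha x)
      (fun x _ => (exp_pos _).le) (tendsto_top a ha)
  have hIic : IntegrableOn (fun t => exp (-t - a * exp (-t))) (Iic 0) := by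
    refine integrableOn_Iic_of_intervalIntegral_norm_bounded
      (exp (-(a * exp (-(0:ℝ)))) / a) 0
      (fun i : ℝ => ((continuous_aux a).integrableOn_Ioc)) (tendsto_id (α := ℝ)) ?_
    simp only [id]
    filter_upwards with i
    have h1 : ∀ x ∈ uIcc i 0, HasDerivAt (fun t => exp (-(a * exp (-t))) / a)
        (exp (-x - a * exp (-x))) x := fun x _ => hasDerivAt_aux a ha x
    have h2 : (∫ x in i..0, ‖exp (-x - a * exp (-x))‖) = ∫ x in i..0, exp (-x - a * exp (-x)) := by
      congr 1 with x; exact norm_of_nonneg (exp_pos _).le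
    rw [h2, intervalIntegral.integral_eq_sub_of_hasDerivAt h1
      ((continuous_aux a).intervalIntegrable _ _)]
    have : 0 ≤ exp (-(a * exp (-i))) / a := by positivity
    linarith
  rw [← integrableOn_univ, ← Set.Iic_union_Ioi (a := (0:ℝ))]
  exact hIic.union hIoi

lemma integral_aux (a : ℝ) (ha : 0 < a) :
    ∫ t, exp (-t - a * exp (-t)) = 1 / a := by
  have := integral_of_hasDerivAt_of_tendsto (fun x => hasDerivAt_aux a ha x)
    (integrable_aux a ha) (tendsto_bot a ha) (tendsto_top a ha)
  simpa using this

lemma integral_Iic_aux (a : ℝ) (ha : 0 < a) (c : ℝ) :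
    ∫ t in Iic c, exp (-t - a * exp (-t)) = exp (-(a * exp (-c))) / a := by
  have := integral_Iic_of_hasDerivAt_of_tendsto' (a := c) (fun x _ => hasDerivAt_aux a ha x)
    ((integrable_aux a ha).integrableOn (s := Iic c)) (tendsto_bot a ha)
  simpa using this

end GumbelAux

namespace GumbelAux

noncomputable def gumbel : Measure ℝ :=
  (volume : Measure ℝ).withDensity (fun t => ENNReal.ofReal (exp (-t - exp (-t))))

lemma meas_density : Measurable (fun t : ℝ => ENNReal.ofReal (exp (-t - exp (-t)))) := by
  have : Continuous (fun t : ℝ => exp (-t - exp (-t))) := by fun_prop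
  exact this.measurable.ennreal_ofReal

lemma ae_nonneg (a : ℝ) (m : Measure ℝ) :
    0 ≤ᵐ[m] fun t => exp (-t - a * exp (-t)) :=
  Filter.Eventually.of_forall fun x => (exp_pos _).le

lemma gumbel_Iic (c : ℝ) : gumbel (Iic c) = ENNReal.ofReal (exp (-exp (-c))) := by
  rw [gumbel, withDensity_apply _ measurableSet_Iic]
  have h1 : ∀ t : ℝ, exp (-t - exp (-t)) = exp (-t - 1 * exp (-t)) := by intro t; rw [one_mul]
  simp_rw [h1]
  rw [← ofReal_integral_eq_lintegral_ofReal ((integrable_aux 1 one_pos).integrableOn)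
    ((ae_nonneg 1 _))]
  rw [integral_Iic_aux 1 one_pos c]
  norm_num

instance : IsProbabilityMeasure gumbel := by
  constructor
  rw [gumbel, withDensity_apply _ MeasurableSet.univ, Measure.restrict_univ]
  have h1 : ∀ t : ℝ, exp (-t - exp (-t)) = exp (-t - 1 * exp (-t)) := by intro t; rw [one_mul]
  simp_rw [h1]
  rw [← ofReal_integral_eq_lintegral_ofReal (integrable_aux 1 one_pos) (ae_nonneg 1 _),
    integral_aux 1 one_pos]
  norm_num

lemma gumbel_singleton (x : ℝ) : gumbel {x} = 0 := by
  rw [gumbel, withDensity_apply _ (measurableSet_singleton x),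
    Measure.restrict_eq_zero.mpr (by simp), lintegral_zero_measure]

lemma gumbel_lintegral (b : ℝ) (hb : 0 ≤ b) :
    ∫⁻ t, ENNReal.ofReal (exp (-(b * exp (-t)))) ∂gumbel = ENNReal.ofReal (1 / (1 + b)) := by
  have hg : Measurable (fun t : ℝ => ENNReal.ofReal (exp (-(b * exp (-t))))) := by
    have : Continuous (fun t : ℝ => exp (-(b * exp (-t)))) := by fun_prop
    exact this.measurable.ennreal_ofReal
  rw [gumbel, lintegral_withDensity_eq_lintegral_mul _ meas_density hg]
  have h1 : ∀ t : ℝ,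
      ((fun t : ℝ => ENNReal.ofReal (exp (-t - exp (-t)))) *
        fun t : ℝ => ENNReal.ofReal (exp (-(b * exp (-t))))) t
      = ENNReal.ofReal (exp (-t - (1 + b) * exp (-t))) := by
    intro t
    simp only [Pi.mul_apply]
    rw [← ENNReal.ofReal_mul (exp_pos _).le, ← exp_add]
    ring_nf
  simp_rw [h1]
  rw [← ofReal_integral_eq_lintegral_ofReal (integrable_aux (1 + b) (by linarith))
    (ae_nonneg (1 + b) _), integral_aux (1 + b) (by linarith)]

end GumbelAux


namespace GumbelAux

variable {Ω : Type*} [MeasurableSpace Ω] {μ : Measure Ω} [IsProbabilityMeasure μ]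
  {N : ℕ} {τ : Fin N → Ω → ℝ}


lemma map_eq (hmeas : ∀ i, Measurable (τ i))
    (hcdf : ∀ i, ∀ t : ℝ, μ {ω | τ i ω ≤ t} = ENNReal.ofReal (exp (-exp (-t))))
    (i : Fin N) : Measure.map (τ i) μ = gumbel := by
  have : IsProbabilityMeasure (Measure.map (τ i) μ) :=
    Measure.isProbabilityMeasure_map (hmeas i).aemeasurable
  refine Measure.ext_of_Iic _ _ (fun c => ?_)
  rw [Measure.map_apply (hmeas i) measurableSet_Iic, gumbel_Iic]
  exact hcdf i c

lemma map_joint (hmeas : ∀ i, Measurable (τ i))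
    (hindep : iIndepFun τ μ)
    (hcdf : ∀ i, ∀ t : ℝ, μ {ω | τ i ω ≤ t} = ENNReal.ofReal (exp (-exp (-t)))) :
    Measure.map (fun ω (i : Fin N) => τ i ω) μ = Measure.pi (fun _ => gumbel) := by
  refine (Measure.pi_eq fun s hs => ?_).symm
  rw [Measure.map_apply (measurable_pi_iff.mpr hmeas) (MeasurableSet.univ_pi hs)]
  have hpre : (fun ω (i : Fin N) => τ i ω) ⁻¹' (univ.pi s) = ⋂ i, τ i ⁻¹' s i := by
    ext ω; simp [Set.mem_pi]
  rw [hpre, hindep.meas_iInter (fun i => ⟨s i, hs i, rfl⟩)]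
  refine Finset.prod_congr rfl fun i _ => ?_
  rw [← map_eq hmeas hcdf i, Measure.map_apply (hmeas i) (hs i)]

lemma eq_event_zero (hmeas : ∀ i, Measurable (τ i))
    (hindep : iIndepFun τ μ)
    (hcdf : ∀ i, ∀ t : ℝ, μ {ω | τ i ω ≤ t} = ENNReal.ofReal (exp (-exp (-t))))
    {i j : Fin N} (hij : i ≠ j) (c : ℝ) :
    μ {ω | τ i ω = τ j ω + c} = 0 := by
  have hpair : Measure.map (fun ω => (τ i ω, τ j ω)) μ = gumbel.prod gumbel := by
    have h := hindep.indepFun hij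
    rw [indepFun_iff_map_prod_eq_prod_map_map (hmeas i).aemeasurable
      (hmeas j).aemeasurable] at h
    rw [h, map_eq hmeas hcdf i, map_eq hmeas hcdf j]
  have hset : MeasurableSet {p : ℝ × ℝ | p.1 = p.2 + c} :=
    measurableSet_eq_fun measurable_fst (measurable_snd.add_const c)
  have hE : {ω | τ i ω = τ j ω + c} = (fun ω => (τ i ω, τ j ω)) ⁻¹' {p | p.1 = p.2 + c} := rfl
  rw [hE, ← Measure.map_apply ((hmeas i).prodMk (hmeas j)) hset, hpair,
    Measure.prod_apply hset]
  have hsec : ∀ x : ℝ, (Prod.mk x ⁻¹' {p : ℝ × ℝ | p.1 = p.2 + c}) = {x - c} := by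
    intro x; ext y
    simp only [mem_preimage, mem_setOf_eq, mem_singleton_iff]
    constructor <;> intro h <;> linarith
  simp_rw [hsec, gumbel_singleton, lintegral_zero]

end GumbelAux


namespace GumbelAux


lemma pi_measure (n : ℕ) (w : Fin (n + 1) → ℝ) (hw : ∀ i, 0 < w i) (j : Fin (n + 1)) :
    Measure.pi (fun _ : Fin (n + 1) => gumbel)
      {x | ∀ i, Real.log (w i) + x i ≤ Real.log (w j) + x j}
      = ENNReal.ofReal (w j / ∑ i, w i) := by
  set S := ∑ i, w i with hSdef
  have hS : 0 < S := Finset.sum_pos (fun i _ => hw i) Finset.univ_nonempty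
  have hwjS : w j ≤ S := Finset.single_le_sum (fun i _ => (hw i).le) (Finset.mem_univ j)
  set b := (S - w j) / w j with hbdef
  have hb : 0 ≤ b := div_nonneg (by linarith) (hw j).le
  set e := MeasurableEquiv.piFinSuccAbove (fun _ : Fin (n + 1) => ℝ) j with hedef
  have hmp := measurePreserving_piFinSuccAbove (fun _ : Fin (n + 1) => gumbel) j
  set B : Set (ℝ × (Fin n → ℝ)) :=
    ⋂ k, {p : ℝ × (Fin n → ℝ) | p.2 k ≤ p.1 + (Real.log (w j) - Real.log (w (j.succAbove k)))}
    with hBdef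
  have hB : MeasurableSet B := by
    refine MeasurableSet.iInter fun k => measurableSet_le ?_ ?_
    · exact (measurable_pi_apply k).comp measurable_snd
    · exact measurable_fst.add_const _
  have hAB : {x : Fin (n + 1) → ℝ | ∀ i, Real.log (w i) + x i ≤ Real.log (w j) + x j}
      = e ⁻¹' B := by
    ext x
    simp only [mem_preimage, mem_setOf_eq, hBdef, mem_iInter, hedef,
      MeasurableEquiv.piFinSuccAbove_apply, Fin.insertNthEquiv, Equiv.coe_fn_symm_mk,
      Fin.removeNth]
    rw [Fin.forall_iff_succAbove j]
    constructor
    · rintro ⟨-, h⟩ k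
      have := h k
      linarith
    · intro h
      refine ⟨le_refl _, fun k => ?_⟩
      have := h k
      linarith
  rw [hAB, hmp.measure_preimage_equiv, Measure.prod_apply hB]
  have hsec : ∀ t : ℝ, (Prod.mk t ⁻¹' B)
      = univ.pi (fun k => Iic (t + (Real.log (w j) - Real.log (w (j.succAbove k))))) := by
    intro t; ext y
    simp [hBdef, Set.mem_pi, Pi.le_def]
  have key : ∀ t : ℝ,
      Measure.pi (fun _ : Fin n => gumbel) (Prod.mk t ⁻¹' B)
        = ENNReal.ofReal (exp (-(b * exp (-t)))) := by
    intro t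
    rw [hsec t, Measure.pi_pi]
    simp_rw [gumbel_Iic]
    rw [← ENNReal.ofReal_prod_of_nonneg (fun _ _ => (exp_pos _).le), ← exp_sum]
    congr 2
    have hterm : ∀ k : Fin n,
        exp (-(t + (Real.log (w j) - Real.log (w (j.succAbove k)))))
          = exp (-t) * (w (j.succAbove k) / w j) := by
      intro k
      rw [show -(t + (Real.log (w j) - Real.log (w (j.succAbove k))))
          = -t + (Real.log (w (j.succAbove k)) - Real.log (w j)) by ring,
        exp_add, exp_sub, exp_log (hw _), exp_log (hw j)]
    simp_rw [hterm]
    have hsum : ∑ k : Fin n, w (j.succAbove k) = S - w j := by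
      have := Fin.sum_univ_succAbove w j
      rw [hSdef]; linarith [this]
    rw [Finset.sum_neg_distrib, neg_inj, ← Finset.mul_sum, ← Finset.sum_div, hsum, hbdef]
    ring
  simp_rw [key]
  rw [gumbel_lintegral b hb]
  have h1b : 1 + b = S / w j := by
    rw [hbdef, one_add_div (hw j).ne']
    congr 1
    ring
  rw [h1b, one_div_div]

end GumbelAux

/-- Gumbel-max trick: for positive weights `w₁, …, w_N` and i.i.d. standard
Gumbel noises `τ₁, …, τ_N`, almost surely the maximizer of `log (w i) + τ i` is unique, and
each `j` is the maximizer with probability `w j / ∑ i, w i`. -/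

theorem gumbel_max_trick
    {Ω : Type*} [MeasurableSpace Ω] (μ : Measure Ω) [IsProbabilityMeasure μ]
    (N : ℕ) (hN : 1 ≤ N)
    (w : Fin N → ℝ) (hw : ∀ i, 0 < w i)
    (τ : Fin N → Ω → ℝ) (hmeas : ∀ i, Measurable (τ i))
    (hindep : iIndepFun τ μ)
    (hcdf : ∀ i, ∀ t : ℝ,
      μ {ω | τ i ω ≤ t} = ENNReal.ofReal (Real.exp (-Real.exp (-t)))) :
    μ {ω | ∃! j : Fin N, ∀ i : Fin N,
        Real.log (w i) + τ i ω ≤ Real.log (w j) + τ j ω} = 1 ∧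
    ∀ j : Fin N,
      μ {ω | ∀ i : Fin N, Real.log (w i) + τ i ω ≤ Real.log (w j) + τ j ω}
        = ENNReal.ofReal (w j / ∑ i, w i) := by
  obtain ⟨n, rfl⟩ : ∃ n, N = n + 1 := ⟨N - 1, (Nat.succ_pred_eq_of_pos hN).symm⟩
  have hpart2 : ∀ j : Fin (n + 1),
      μ {ω | ∀ i, Real.log (w i) + τ i ω ≤ Real.log (w j) + τ j ω}
        = ENNReal.ofReal (w j / ∑ i, w i) := by
    intro j
    have hA : MeasurableSet
        {x : Fin (n + 1) → ℝ | ∀ i, Real.log (w i) + x i ≤ Real.log (w j) + x j} := by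
      have : {x : Fin (n + 1) → ℝ | ∀ i, Real.log (w i) + x i ≤ Real.log (w j) + x j}
          = ⋂ i, {x : Fin (n + 1) → ℝ | Real.log (w i) + x i ≤ Real.log (w j) + x j} := by
        ext x; simp
      rw [this]
      exact MeasurableSet.iInter fun i => measurableSet_le
        ((measurable_pi_apply i).const_add _) ((measurable_pi_apply j).const_add _)
    have hE : {ω | ∀ i, Real.log (w i) + τ i ω ≤ Real.log (w j) + τ j ω}
        = (fun ω (i : Fin (n + 1)) => τ i ω) ⁻¹'
          {x : Fin (n + 1) → ℝ | ∀ i, Real.log (w i) + x i ≤ Real.log (w j) + x j} := rfl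
    rw [hE, ← Measure.map_apply (measurable_pi_iff.mpr hmeas) hA,
      GumbelAux.map_joint hmeas hindep hcdf, GumbelAux.pi_measure n w hw j]
  refine ⟨?_, hpart2⟩
  set T : Set Ω := ⋃ (i : Fin (n + 1)), ⋃ (j : Fin (n + 1)), ⋃ (_ : i ≠ j),
    {ω | τ i ω = τ j ω + (Real.log (w j) - Real.log (w i))} with hT
  have hTmeas : MeasurableSet T := by
    refine MeasurableSet.iUnion fun i => MeasurableSet.iUnion fun j =>
      MeasurableSet.iUnion fun hij => ?_
    exact measurableSet_eq_fun (hmeas i) ((hmeas j).add_const _)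
  have hT0 : μ T = 0 := by
    refine measure_iUnion_null fun i => measure_iUnion_null fun j =>
      measure_iUnion_null fun hij => ?_
    exact GumbelAux.eq_event_zero hmeas hindep hcdf hij _
  have hsub : Tᶜ ⊆ {ω | ∃! j : Fin (n + 1), ∀ i : Fin (n + 1),
      Real.log (w i) + τ i ω ≤ Real.log (w j) + τ j ω} := by
    intro ω hω
    obtain ⟨j, -, hj⟩ := Finset.exists_max_image Finset.univ
      (fun i : Fin (n + 1) => Real.log (w i) + τ i ω) Finset.univ_nonempty
    refine ⟨j, fun i => hj i (Finset.mem_univ i), ?_⟩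
    intro j' hj'
    by_contra hne
    apply hω
    simp only [hT, mem_iUnion]
    refine ⟨j', j, hne, ?_⟩
    have h1 : Real.log (w j') + τ j' ω = Real.log (w j) + τ j ω :=
      le_antisymm (hj j' (Finset.mem_univ _)) (hj' j)
    simp only [mem_setOf_eq]
    linarith
  have hTc : μ Tᶜ = 1 := by
    rw [measure_compl hTmeas (measure_ne_top μ T), hT0, measure_univ, tsub_zero]
  refine le_antisymm prob_le_one ?_
  calc (1 : ENNReal) = μ Tᶜ := hTc.symm
    _ ≤ _ := measure_mono hsub
end

section
/- Let d ≥ 1, σ > 0, and x, y ∈ ℝ^d. Let ω be a standard Gaussian random vector in ℝ^d (mean 0, identity covariance). Then E[ exp(-‖x‖²/σ²) exp(⟨ω, x⟩/σ) · exp(-‖y‖²/σ²) exp(⟨ω, y⟩/σ) ] = exp(-‖x - y‖²/(2σ²)). In particular, the positive random feature map η₊(u) = exp(-‖u‖²/σ² + ⟨ω, u⟩/σ) gives an unbiased one-sample estimator of the Gaussian kernel: E[η₊(x) η₊(y)] = exp(-‖x - y‖²/(2σ²)). -/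
open MeasureTheory ProbabilityTheory Real

open scoped ENNReal NNReal

lemma mgf_std_gauss (t : ℝ) :
    ∫ x, Real.exp (t * x) ∂(gaussianReal 0 1) = Real.exp (t ^ 2 / 2) := by
  rw [gaussianReal_of_var_ne_zero 0 one_ne_zero]
  have hmeas : Measurable fun x => (gaussianPDFReal 0 1 x).toNNReal :=
    (measurable_gaussianPDFReal 0 1).real_toNNReal
  have hpdf : gaussianPDF 0 1 = fun x => ((gaussianPDFReal 0 1 x).toNNReal : ℝ≥0∞) := by
    ext x; simp [gaussianPDF, ENNReal.ofReal]
  rw [hpdf, integral_withDensity_eq_integral_smul hmeas]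
  have h1 : ∀ x : ℝ, (gaussianPDFReal 0 1 x).toNNReal • Real.exp (t * x)
      = ((Real.sqrt (2 * π))⁻¹ * Real.exp (t ^ 2 / 2)) * Real.exp (-(1/2) * (x - t) ^ 2) := by
    intro x
    rw [NNReal.smul_def, smul_eq_mul, Real.coe_toNNReal _ (gaussianPDFReal_nonneg 0 1 x)]
    simp only [gaussianPDFReal, NNReal.coe_one, mul_one, sub_zero]
    rw [mul_assoc, ← Real.exp_add, mul_assoc, ← Real.exp_add]
    congr 2
    ring
  rw [integral_congr_ae (Filter.Eventually.of_forall h1)]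
  rw [integral_const_mul, integral_sub_right_eq_self (fun a => Real.exp (-(1/2) * a ^ 2)) t,
    integral_gaussian]
  rw [show π / (1/2 : ℝ) = 2 * π by ring]
  rw [inv_mul_eq_div]
  exact div_mul_cancel₀ _ (by positivity)

lemma integral_pi_prod {n : ℕ} (μ : Measure ℝ) [SigmaFinite μ] (f : Fin n → ℝ → ℝ) :
    ∫ x : Fin n → ℝ, ∏ i, f i (x i) ∂(Measure.pi fun _ => μ) = ∏ i, ∫ x, f i x ∂μ := by
  induction n with
  | zero =>
      simp only [Finset.univ_eq_empty, Finset.prod_empty, integral_const,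
        measureReal_def, Measure.pi_empty_univ, ENNReal.toReal_one, smul_eq_mul, mul_one, one_smul]
  | succ n ih =>
      calc
        _ = ∫ p : ℝ × (Fin n → ℝ), f 0 p.1 * ∏ i : Fin n, f i.succ (p.2 i)
            ∂(μ.prod (Measure.pi fun _ => μ)) := by
          rw [← ((MeasureTheory.measurePreserving_piFinSuccAbove
            (fun _ : Fin (n+1) => μ) 0).symm).integral_comp']
          congr 1
          ext p
          simp [MeasurableEquiv.piFinSuccAbove_symm_apply, Fin.insertNthEquiv,
            Fin.prod_univ_succ, Fin.insertNth_zero, Fin.cons_succ,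
            Fin.zero_succAbove, Fin.cons_zero]
        _ = (∫ x, f 0 x ∂μ) * ∏ i : Fin n, ∫ x, f i.succ x ∂μ := by
          rw [← ih (fun i => f i.succ), ← integral_prod_mul]
        _ = _ := (Fin.prod_univ_succ fun i => ∫ x, f i x ∂μ).symm

/-- positive random features give an unbiased one-sample estimator of the
Gaussian kernel: for `ω ~ N(0, I_d)` standard Gaussian in `ℝ^d`,
`E[η₊(x) η₊(y)] = exp (-‖x-y‖²/(2σ²))` where `η₊(u) = exp (-‖u‖²/σ² + ⟨ω, u⟩/σ)`. -/
theorem positive_random_features_unbiased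
    (d : ℕ) (hd : 1 ≤ d) (σ : ℝ) (hσ : 0 < σ) (x y : Fin d → ℝ) :
    ∫ ω : Fin d → ℝ,
      (Real.exp (-(∑ i, (x i) ^ 2) / σ ^ 2) * Real.exp ((∑ i, ω i * x i) / σ)) *
      (Real.exp (-(∑ i, (y i) ^ 2) / σ ^ 2) * Real.exp ((∑ i, ω i * y i) / σ))
      ∂(Measure.pi fun _ : Fin d => gaussianReal 0 1)
    = Real.exp (-(∑ i, (x i - y i) ^ 2) / (2 * σ ^ 2)) := by
  have hσ0 : σ ≠ 0 := ne_of_gt hσ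
  have h1 : ∀ ω : Fin d → ℝ,
      (Real.exp (-(∑ i, (x i) ^ 2) / σ ^ 2) * Real.exp ((∑ i, ω i * x i) / σ)) *
      (Real.exp (-(∑ i, (y i) ^ 2) / σ ^ 2) * Real.exp ((∑ i, ω i * y i) / σ))
      = (Real.exp (-(∑ i, (x i) ^ 2) / σ ^ 2) * Real.exp (-(∑ i, (y i) ^ 2) / σ ^ 2)) *
        ∏ i, Real.exp ((x i + y i) / σ * ω i) := by
    intro ω
    rw [← Real.exp_sum]
    have hs : ∑ i, (x i + y i) / σ * ω i
        = (∑ i, ω i * x i) / σ + (∑ i, ω i * y i) / σ := by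
      rw [Finset.sum_div, Finset.sum_div, ← Finset.sum_add_distrib]
      exact Finset.sum_congr rfl fun i _ => by field_simp
    rw [hs, Real.exp_add]
    ring
  rw [integral_congr_ae (Filter.Eventually.of_forall h1), integral_const_mul,
    integral_pi_prod (gaussianReal 0 1) (fun i s => Real.exp ((x i + y i) / σ * s))]
  simp_rw [mgf_std_gauss]
  rw [← Real.exp_sum, ← Real.exp_add, ← Real.exp_add]
  congr 1
  have hpt : ∀ i : Fin d, ((x i + y i) / σ) ^ 2 / 2
      = ((x i)^2 + (y i)^2 - (x i - y i)^2 / 2) / σ ^ 2 := fun i => by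
    field_simp; ring
  simp_rw [hpt]
  rw [← Finset.sum_div, Finset.sum_sub_distrib, Finset.sum_add_distrib, ← Finset.sum_div]
  field_simp
  ring
end
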